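/- Let f : A → B be a group homomorphism inducing an isomorphism on abelianizations and a surjection on second integral homology. Then f induces an injection A/A_ω → B/B_ω, where A_ω = ∩_{k≥1} A_k is the intersection of all terms of the lower central series. In particular, if A is residually nilpotent (A_ω = 1), then the composition A → B → B/B_ω is injective. -/

import Mathlib

/- Since this Mathlib snapshot does not contain group homology, we set up the standard
concrete (Hopf-formula) model of the second integral homology `H₂(G; ℤ)` of a group `G`,
using the canonical free presentation `FreeGroup G → G`:
`H₂(G; ℤ) ≅ (R ∩ [F,F])/[F,R]` where `F = FreeGroup G` and `R` is the kernel of the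
canonical projection. This model is functorial, giving the induced map `H₂(f)`. -/

/-- The canonical presentation `FreeGroup G → G`. -/
abbrev canonicalPresentation (G : Type*) [Group G] : FreeGroup G →* G :=
  FreeGroup.lift id

/-- The relation subgroup `R` of the canonical presentation. -/
abbrev presKer (G : Type*) [Group G] : Subgroup (FreeGroup G) :=
  (canonicalPresentation G).ker

/-- The numerator `R ∩ [F, F]` of Hopf's formula. -/
abbrev hopfNum (G : Type*) [Group G] : Subgroup (FreeGroup G) :=
  presKer G ⊓ commutator (FreeGroup G)

/-- The denominator `[F, R]` of Hopf's formula. -/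
abbrev hopfDen (G : Type*) [Group G] : Subgroup (FreeGroup G) :=
  ⁅(⊤ : Subgroup (FreeGroup G)), presKer G⁆

/-- The Hopf-formula model of the second integral group homology `H₂(G; ℤ)`:
`(R ∩ [F,F])/[F,R]` for the canonical presentation `F/R` of `G`. -/
abbrev H2Group (G : Type*) [Group G] :=
  ↥(hopfNum G) ⧸ ((hopfDen G).subgroupOf (hopfNum G))

/-- Functoriality of the Hopf model: the map induced on `H₂` by a group homomorphism,
coming from the lift `FreeGroup f : FreeGroup A → FreeGroup B`. -/
noncomputable def H2Map {A B : Type*} [Group A] [Group B] (f : A →* B) :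
    H2Group A →* H2Group B :=
  QuotientGroup.map _ _
    (((FreeGroup.map (f : A → B)).domRestrict (hopfNum A)).codRestrict (hopfNum B)
      (fun x => by
        obtain ⟨hker, hcomm⟩ := x.2
        constructor
        · have : (canonicalPresentation B).comp (FreeGroup.map (f : A → B)) =
              f.comp (canonicalPresentation A) := by
            ext a
            simp [canonicalPresentation]
          have heq := congrArg (fun g => g x.1) this
          simp only [MonoidHom.comp_apply] at heq
          show FreeGroup.map (f : A → B) x.1 ∈ (canonicalPresentation B).ker
          rw [MonoidHom.mem_ker, heq]
          have hker' : canonicalPresentation A x.1 = 1 := hker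
          rw [hker', map_one]
        · have : Subgroup.map (FreeGroup.map (f : A → B)) (commutator (FreeGroup A)) ≤
              commutator (FreeGroup B) := by
            rw [commutator, Subgroup.map_commutator]
            exact Subgroup.commutator_mono le_top le_top
          exact this ⟨x.1, hcomm, rfl⟩))
    (by
      rintro ⟨x, hx⟩ hmem
      simp only [Subgroup.mem_subgroupOf] at hmem ⊢
      have : Subgroup.map (FreeGroup.map (f : A → B)) (hopfDen A) ≤ hopfDen B := by
        rw [hopfDen, Subgroup.map_commutator]
        refine Subgroup.commutator_mono le_top ?_
        rintro y ⟨z, hz, rfl⟩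
        have : (canonicalPresentation B).comp (FreeGroup.map (f : A → B)) =
            f.comp (canonicalPresentation A) := by
          ext a; simp [canonicalPresentation]
        have hz' := congrArg (fun g => g z) this
        simp only [MonoidHom.comp_apply] at hz'
        show FreeGroup.map (f : A → B) z ∈ (canonicalPresentation B).ker
        rw [MonoidHom.mem_ker, hz']
        have hz'' : canonicalPresentation A z = 1 := hz
        rw [hz'', map_one]
      exact this ⟨x, hmem, rfl⟩)

/-- The ω-term of the lower central series, `A_ω = ⋂_k A_k`. -/
abbrev lcsOmega (A : Type*) [Group A] : Subgroup A :=
  ⨅ k : ℕ, (⊤ : Subgroup A).lowerCentralSeries k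

instance (A : Type*) [Group A] : (lcsOmega A).Normal :=
  ⟨fun n hn g => Subgroup.mem_iInf.2 fun k =>
    Subgroup.Normal.conj_mem inferInstance n (Subgroup.mem_iInf.1 hn k) g⟩


open scoped commutatorElement

section StallingsAux

open Subgroup

/-- Comparison lemma: two homomorphisms out of a free group that agree modulo a
normal subgroup `N` agree modulo `⁅⊤, N⁆` on the commutator subgroup. -/
theorem stallings_comparison {X G : Type*} [Group G] (α β : FreeGroup X →* G)
    (N : Subgroup G) [hN : N.Normal]
    (h : ∀ x, α (FreeGroup.of x) * (β (FreeGroup.of x))⁻¹ ∈ N) :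
    ∀ w ∈ commutator (FreeGroup X), α w * (β w)⁻¹ ∈ ⁅(⊤ : Subgroup G), N⁆ := by
  set M : Subgroup G := ⁅(⊤ : Subgroup G), N⁆ with hMdef
  haveI hMn : M.Normal := Subgroup.commutator_normal ⊤ N
  -- every element of `N` becomes central in `G ⧸ M`
  have hcen : ∀ n ∈ N, ((n : G) : G ⧸ M) ∈ Subgroup.center (G ⧸ M) := by
    intro n hn
    rw [Subgroup.mem_center_iff]
    intro q
    induction q using QuotientGroup.induction_on with
    | H g =>
      show ((g * n : G) : G ⧸ M) = ((n * g : G) : G ⧸ M)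
      rw [QuotientGroup.eq]
      have : (g * n)⁻¹ * (n * g) = ⁅n⁻¹, g⁻¹⁆ := by
        rw [commutatorElement_def]; group
      rw [this, hMdef, Subgroup.commutator_comm]
      exact Subgroup.commutator_mem_commutator (N.inv_mem hn) (mem_top _)
  have hmapcen : N.map (QuotientGroup.mk' M) ≤ Subgroup.center (G ⧸ M) := by
    rintro _ ⟨n, hn, rfl⟩
    exact hcen n hn
  -- the "difference" function has values in the central subgroup `N.map mk`
  set D : FreeGroup X → G ⧸ M := fun w => ((α w : G) : G ⧸ M) * ((β w : G) : G ⧸ M)⁻¹ with hD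
  have hval : ∀ w, D w ∈ N.map (QuotientGroup.mk' M) := by
    intro w
    induction w using FreeGroup.induction_on with
    | C1 =>
      have h1 : D 1 = 1 := by simp [hD]
      rw [h1]; exact Subgroup.one_mem _
    | of x =>
      show D (FreeGroup.of x) ∈ _
      have : D (FreeGroup.of x) =
          QuotientGroup.mk' M (α (FreeGroup.of x) * (β (FreeGroup.of x))⁻¹) := by
        simp [hD]
      rw [this]
      exact Subgroup.mem_map_of_mem _ (h x)
    | inv_of x hx =>
      show D (FreeGroup.of x)⁻¹ ∈ _
      have hx : D (FreeGroup.of x) ∈ Subgroup.map (QuotientGroup.mk' M) N := hx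
      have hcx := Subgroup.mem_center_iff.mp (hmapcen hx)
      have key : D (FreeGroup.of x)⁻¹ = (D (FreeGroup.of x))⁻¹ := by
        simp only [hD, map_inv, QuotientGroup.mk_inv]
        set a : G ⧸ M := ((α (FreeGroup.of x) : G) : G ⧸ M)
        set b : G ⧸ M := ((β (FreeGroup.of x) : G) : G ⧸ M)
        have h1 : b⁻¹ * (a * b⁻¹) = (a * b⁻¹) * b⁻¹ := hcx b⁻¹
        have : b⁻¹ * a = a * b⁻¹ := by
          calc b⁻¹ * a = b⁻¹ * (a * b⁻¹) * b := by group
          _ = (a * b⁻¹) * b⁻¹ * b := by rw [h1]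
          _ = a * b⁻¹ := by group
        calc a⁻¹ * b⁻¹⁻¹ = (b⁻¹ * a)⁻¹ := by group
        _ = (a * b⁻¹)⁻¹ := by rw [this]
      rw [key]
      exact Subgroup.inv_mem _ hx
    | mul u v hu hv =>
      have hcv := Subgroup.mem_center_iff.mp (hmapcen hv)
      have key : D (u * v) = D v * D u := by
        simp only [hD, map_mul, QuotientGroup.mk_mul]
        set au : G ⧸ M := ((α u : G) : G ⧸ M)
        set av : G ⧸ M := ((α v : G) : G ⧸ M)
        set bu : G ⧸ M := ((β u : G) : G ⧸ M)
        set bv : G ⧸ M := ((β v : G) : G ⧸ M)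
        have h1 : au * (av * bv⁻¹) = (av * bv⁻¹) * au := hcv au
        calc au * av * (bu * bv)⁻¹ = au * (av * bv⁻¹) * bu⁻¹ := by group
        _ = (av * bv⁻¹) * au * bu⁻¹ := by rw [h1]
        _ = av * bv⁻¹ * (au * bu⁻¹) := by group
      rw [key]
      exact Subgroup.mul_mem _ hv hu
  -- `D` is a homomorphism with central values, hence kills commutators
  have hmul : ∀ u v, D (u * v) = D u * D v := by
    intro u v
    have hcv := Subgroup.mem_center_iff.mp (hmapcen (hval v))
    have h1 : ((α u : G) : G ⧸ M) * D v = D v * ((α u : G) : G ⧸ M) := hcv _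
    have h2 : D v * D u = D u * D v := (hcv (D u)).symm
    simp only [hD, map_mul, QuotientGroup.mk_mul]
    simp only [hD] at h1 h2
    calc ((α u : G) : G ⧸ M) * ((α v : G) : G ⧸ M) *
          (((β u : G) : G ⧸ M) * ((β v : G) : G ⧸ M))⁻¹
        = ((α u : G) : G ⧸ M) * (((α v : G) : G ⧸ M) * ((β v : G) : G ⧸ M)⁻¹) *
          ((β u : G) : G ⧸ M)⁻¹ := by group
      _ = (((α v : G) : G ⧸ M) * ((β v : G) : G ⧸ M)⁻¹) * ((α u : G) : G ⧸ M) *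
          ((β u : G) : G ⧸ M)⁻¹ := by rw [h1]
      _ = (((α u : G) : G ⧸ M) * ((β u : G) : G ⧸ M)⁻¹) *
          (((α v : G) : G ⧸ M) * ((β v : G) : G ⧸ M)⁻¹) := by rw [← h2]; group
  set δ : FreeGroup X →* G ⧸ M := MonoidHom.mk' D hmul with hδ
  have hker : commutator (FreeGroup X) ≤ δ.ker := by
    rw [_root_.commutator_def, Subgroup.commutator_le]
    intro g₁ _ g₂ _
    rw [MonoidHom.mem_ker, map_commutatorElement]
    exact commutatorElement_eq_one_iff_commute.mpr
      ((Subgroup.mem_center_iff.mp (hmapcen (hval g₁)) (δ g₂)).symm)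
  intro w hw
  have : δ w = 1 := hker hw
  have : ((α w * (β w)⁻¹ : G) : G ⧸ M) = 1 := by
    rw [QuotientGroup.mk_mul, QuotientGroup.mk_inv]
    exact this
  exact (QuotientGroup.eq_one_iff _).mp this

end StallingsAux
section StallingsAux2

open Subgroup

theorem pres_surjective (G : Type*) [Group G] :
    Function.Surjective (canonicalPresentation G) :=
  fun g => ⟨FreeGroup.of g, by simp [canonicalPresentation]⟩

theorem lcs_map_eq {G H : Type*} [Group G] [Group H] (p : G →* H)
    (hp : Function.Surjective p) (n : ℕ) :
    Subgroup.map p ((⊤ : Subgroup G).lowerCentralSeries n) = (⊤ : Subgroup H).lowerCentralSeries n := by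
  induction n with
  | zero => simpa using Subgroup.map_top_of_surjective p hp
  | succ n ih =>
    show Subgroup.map p ⁅(⊤ : Subgroup G).lowerCentralSeries n, ⊤⁆ = ⁅(⊤ : Subgroup H).lowerCentralSeries n, ⊤⁆
    rw [Subgroup.map_commutator, ih, Subgroup.map_top_of_surjective p hp]

theorem T_eq_comap (G : Type*) [Group G] (n : ℕ) :
    presKer G ⊔ (⊤ : Subgroup (FreeGroup G)).lowerCentralSeries n
      = Subgroup.comap (canonicalPresentation G) ((⊤ : Subgroup G).lowerCentralSeries n) := by
  rw [← lcs_map_eq (canonicalPresentation G) (pres_surjective G) n,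
    Subgroup.comap_map_eq, sup_comm]

theorem mem_T_iff {G : Type*} [Group G] {n : ℕ} {w : FreeGroup G} :
    w ∈ presKer G ⊔ (⊤ : Subgroup (FreeGroup G)).lowerCentralSeries n ↔
      canonicalPresentation G w ∈ (⊤ : Subgroup G).lowerCentralSeries n := by
  rw [T_eq_comap]; exact Iff.rfl

theorem pres_apply {A B : Type*} [Group A] [Group B] (f : A →* B) (w : FreeGroup A) :
    canonicalPresentation B (FreeGroup.map (f : A → B) w)
      = f (canonicalPresentation A w) := by
  have : (canonicalPresentation B).comp (FreeGroup.map (f : A → B)) =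
      f.comp (canonicalPresentation A) := by
    ext a; simp [canonicalPresentation]
  exact DFunLike.congr_fun this w

theorem fg_map_commutator_le {A B : Type*} [Group A] [Group B] (f : A →* B)
    {w : FreeGroup A} (hw : w ∈ commutator (FreeGroup A)) :
    FreeGroup.map (f : A → B) w ∈ commutator (FreeGroup B) := by
  have : Subgroup.map (FreeGroup.map (f : A → B)) (commutator (FreeGroup A)) ≤
      commutator (FreeGroup B) := by
    simp only [_root_.commutator_def]
    rw [Subgroup.map_commutator]
    exact Subgroup.commutator_mono le_top le_top
  exact this ⟨w, hw, rfl⟩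

theorem epi_one {A B : Type*} [Group A] [Group B] (f : A →* B)
    (h1s : Function.Surjective (Abelianization.map f)) :
    f.range ⊔ (⊤ : Subgroup B).lowerCentralSeries 1 = ⊤ := by
  rw [eq_top_iff]
  intro b _
  obtain ⟨q, hq⟩ := h1s (Abelianization.of b)
  obtain ⟨a, rfl⟩ : ∃ a : A, Abelianization.of a = q := by
    induction q using QuotientGroup.induction_on with
    | H a => exact ⟨a, rfl⟩
  rw [Abelianization.map_of] at hq
  have hmem : (f a)⁻¹ * b ∈ commutator B := by
    have h' : (QuotientGroup.mk (f a) : B ⧸ commutator B) = QuotientGroup.mk b := hq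
    exact QuotientGroup.eq.mp h'
  have hb : b = f a * ((f a)⁻¹ * b) := by group
  rw [hb]
  exact Subgroup.mul_mem _ (Subgroup.mem_sup_left (show f a ∈ f.range from ⟨a, rfl⟩))
    (Subgroup.mem_sup_right (show (f a)⁻¹ * b ∈ (⊤ : Subgroup B).lowerCentralSeries 1 from hmem))

theorem commElt_central_left {G : Type*} [Group G] (h z c : G)
    (hz : ∀ q, q * z = z * q) : ⁅h * z, c⁆ = ⁅h, c⁆ := by
  have h1 : z * c * z⁻¹ = c := by rw [← hz c]; group
  calc ⁅h * z, c⁆ = h * (z * c * z⁻¹) * h⁻¹ * c⁻¹ := by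
        rw [commutatorElement_def]; group
    _ = h * c * h⁻¹ * c⁻¹ := by rw [h1]
    _ = ⁅h, c⁆ := (commutatorElement_def h c).symm

theorem commElt_central_right {G : Type*} [Group G] (h c z : G)
    (hz : ∀ q, q * z = z * q) : ⁅h, c * z⁆ = ⁅h, c⁆ := by
  have h1 : z * h⁻¹ * z⁻¹ = h⁻¹ := by rw [← hz h⁻¹]; group
  calc ⁅h, c * z⁆ = h * c * (z * h⁻¹ * z⁻¹) * c⁻¹ := by
        rw [commutatorElement_def]; group
    _ = h * c * h⁻¹ * c⁻¹ := by rw [h1]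
    _ = ⁅h, c⁆ := (commutatorElement_def h c).symm

theorem epi_all {A B : Type*} [Group A] [Group B] (f : A →* B)
    (h1s : Function.Surjective (Abelianization.map f)) :
    ∀ n, f.range ⊔ (⊤ : Subgroup B).lowerCentralSeries n = ⊤ := by
  intro n
  induction n with
  | zero => simp
  | succ n ih =>
    cases n with
    | zero => exact epi_one f h1s
    | succ m =>
      -- work in Q := B ⧸ (⊤ : Subgroup B).lowerCentralSeries (m+2)
      set N : Subgroup B := (⊤ : Subgroup B).lowerCentralSeries (m + 2) with hN
      set mk : B →* B ⧸ N := QuotientGroup.mk' N with hmk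
      have hmks : Function.Surjective mk := QuotientGroup.mk'_surjective N
      set Hbar : Subgroup (B ⧸ N) := Subgroup.map mk f.range with hHbar
      set Z : Subgroup (B ⧸ N) := Subgroup.map mk ((⊤ : Subgroup B).lowerCentralSeries (m + 1)) with hZ
      have hZc : ∀ z ∈ Z, ∀ q : B ⧸ N, q * z = z * q := by
        rintro _ ⟨z, hz, rfl⟩ q
        induction q using QuotientGroup.induction_on with
        | H g =>
          show ((g * z : B) : B ⧸ N) = ((z * g : B) : B ⧸ N)
          rw [QuotientGroup.eq]
          have : (g * z)⁻¹ * (z * g) = ⁅z⁻¹, g⁻¹⁆ := by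
            rw [commutatorElement_def]; group
          rw [this]
          exact Subgroup.commutator_mem_commutator
            (Subgroup.inv_mem _ hz) (Subgroup.mem_top _)
      haveI hZn : Z.Normal := by
        constructor
        intro z hz g
        have := hZc z hz g
        have : g * z * g⁻¹ = z := by rw [this]; group
        rw [this]; exact hz
      have hHZ : Hbar ⊔ Z = ⊤ := by
        rw [hHbar, hZ, ← Subgroup.map_sup, ih, Subgroup.map_top_of_surjective mk hmks]
      have hcommQ : commutator (B ⧸ N) ≤ Hbar := by
        rw [_root_.commutator_def, Subgroup.commutator_le]
        intro g₁ _ g₂ _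
        have hg₁ : g₁ ∈ Hbar ⊔ Z := hHZ.symm ▸ Subgroup.mem_top g₁
        have hg₂ : g₂ ∈ Hbar ⊔ Z := hHZ.symm ▸ Subgroup.mem_top g₂
        rw [← SetLike.mem_coe, Subgroup.mul_normal] at hg₁ hg₂
        obtain ⟨h₁, hh₁, z₁, hz₁, rfl⟩ := hg₁
        obtain ⟨h₂, hh₂, z₂, hz₂, rfl⟩ := hg₂
        rw [commElt_central_left h₁ z₁ _ (hZc z₁ hz₁),
          commElt_central_right h₁ h₂ z₂ (hZc z₂ hz₂)]
        rw [commutatorElement_def]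
        exact Subgroup.mul_mem _ (Subgroup.mul_mem _ (Subgroup.mul_mem _ hh₁ hh₂)
          (Subgroup.inv_mem _ hh₁)) (Subgroup.inv_mem _ hh₂)
      have hbase : Hbar ⊔ commutator (B ⧸ N) = ⊤ := by
        have h1 := congrArg (Subgroup.map mk) (epi_one f h1s)
        rw [Subgroup.map_sup, Subgroup.map_top_of_surjective mk hmks] at h1
        rw [show Subgroup.map mk ((⊤ : Subgroup B).lowerCentralSeries 1)
            = (⊤ : Subgroup (B ⧸ N)).lowerCentralSeries 1 from lcs_map_eq mk hmks 1] at h1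
        exact h1
      have hHtop : Hbar = ⊤ := by
        rw [eq_top_iff, ← hbase]
        exact sup_le le_rfl hcommQ
      have h2 := congrArg (Subgroup.comap mk) hHtop
      rw [Subgroup.comap_map_eq, Subgroup.comap_top] at h2
      rw [show mk.ker = N from QuotientGroup.ker_mk' N] at h2
      exact h2

theorem h2_elem {A B : Type*} [Group A] [Group B] (f : A →* B)
    (h2 : Function.Surjective (H2Map f)) :
    ∀ s : FreeGroup B, s ∈ hopfNum B →
      ∃ t ∈ hopfNum A, (FreeGroup.map (f : A → B) t)⁻¹ * s ∈ hopfDen B := by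
  intro s hs
  obtain ⟨q, hq⟩ := h2 (QuotientGroup.mk ⟨s, hs⟩)
  obtain ⟨⟨t, ht⟩, rfl⟩ := QuotientGroup.mk'_surjective _ q
  refine ⟨t, ht, ?_⟩
  rw [H2Map] at hq
  rw [show (QuotientGroup.mk' ((hopfDen A).subgroupOf (hopfNum A))) ⟨t, ht⟩
      = (QuotientGroup.mk ⟨t, ht⟩ : H2Group A) from rfl] at hq
  rw [QuotientGroup.map_mk] at hq
  have := QuotientGroup.eq.mp hq
  rw [Subgroup.mem_subgroupOf] at this
  simpa using this

end StallingsAux2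

theorem stallings_mono {A B : Type*} [Group A] [Group B] (f : A →* B)
    (h1 : Function.Bijective (Abelianization.map f))
    (h2 : Function.Surjective (H2Map f)) :
    ∀ n, ∀ w : FreeGroup A,
      FreeGroup.map (f : A → B) w ∈ presKer B ⊔ (⊤ : Subgroup (FreeGroup B)).lowerCentralSeries n →
        w ∈ presKer A ⊔ (⊤ : Subgroup (FreeGroup A)).lowerCentralSeries n := by
  intro n
  induction n with
  | zero =>
    intro w _
    exact Subgroup.mem_sup_right (Subgroup.mem_top w)
  | succ n ih =>
    cases n with
    | zero =>
      intro w hw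
      rw [mem_T_iff] at hw ⊢
      rw [pres_apply] at hw
      have h1' : Abelianization.map f (Abelianization.of (canonicalPresentation A w)) = 1 := by
        rw [Abelianization.map_of]
        exact (QuotientGroup.eq_one_iff _).mpr hw
      have h1'' : Abelianization.of (canonicalPresentation A w) = 1 := by
        apply h1.1
        rw [h1', map_one]
      exact (QuotientGroup.eq_one_iff _).mp h1''
    | succ m =>
      intro w hw
      set k := m + 1 with hk
      rw [mem_T_iff]
      -- build the reverse lift ψ from Epi_k
      have epik := epi_all f h1.2 k
      have hchoice : ∀ b : B, ∃ a : A, (f a)⁻¹ * b ∈ (⊤ : Subgroup B).lowerCentralSeries k := by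
        intro b
        have hb : b ∈ f.range ⊔ (⊤ : Subgroup B).lowerCentralSeries k := epik.symm ▸ Subgroup.mem_top b
        rw [← SetLike.mem_coe, Subgroup.mul_normal] at hb
        obtain ⟨x, hx, z, hz, rfl⟩ := hb
        obtain ⟨a, rfl⟩ := hx
        exact ⟨a, by simpa using hz⟩
      choose g0 hg0 using hchoice
      set ψ : FreeGroup B →* FreeGroup A := FreeGroup.lift (fun b => FreeGroup.of (g0 b))
        with hψdef
      have hψof : ∀ b : B, ψ (FreeGroup.of b) = FreeGroup.of (g0 b) := by
        intro b; rw [hψdef]; exact FreeGroup.lift_apply_of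
      have hφof : ∀ a : A, FreeGroup.map (f : A → B) (FreeGroup.of a) = FreeGroup.of (f a) :=
        fun a => FreeGroup.map.of
      have hπ'of : ∀ b : B, canonicalPresentation B (FreeGroup.of b) = b := by
        intro b; simp [canonicalPresentation]
      have hπof : ∀ a : A, canonicalPresentation A (FreeGroup.of a) = a := by
        intro a; simp [canonicalPresentation]
      have hkey : ∀ w' : FreeGroup B, (FreeGroup.map (f : A → B) (ψ w'))⁻¹ * w'
          ∈ presKer B ⊔ (⊤ : Subgroup (FreeGroup B)).lowerCentralSeries k := by
        have hhom : (QuotientGroup.mk' (presKer B ⊔ (⊤ : Subgroup (FreeGroup B)).lowerCentralSeries k)).comp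
            ((FreeGroup.map (f : A → B)).comp ψ)
            = QuotientGroup.mk' (presKer B ⊔ (⊤ : Subgroup (FreeGroup B)).lowerCentralSeries k) := by
          apply FreeGroup.ext_hom
          intro b
          simp only [MonoidHom.comp_apply, QuotientGroup.mk'_apply]
          rw [QuotientGroup.eq]
          rw [hψof b, hφof (g0 b)]
          apply mem_T_iff.mpr
          rw [map_mul, map_inv, hπ'of (f (g0 b)), hπ'of b]
          exact hg0 b
        intro w'
        have h' := DFunLike.congr_fun hhom w'
        simp only [MonoidHom.comp_apply, QuotientGroup.mk'_apply] at h'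
        exact QuotientGroup.eq.mp h'
      have hψT : ∀ w' ∈ presKer B ⊔ (⊤ : Subgroup (FreeGroup B)).lowerCentralSeries k,
          ψ w' ∈ presKer A ⊔ (⊤ : Subgroup (FreeGroup A)).lowerCentralSeries k := by
        intro w' hw'
        apply ih
        have hu := hkey w'
        have heq : FreeGroup.map (f : A → B) (ψ w')
            = w' * ((FreeGroup.map (f : A → B) (ψ w'))⁻¹ * w')⁻¹ := by group
        rw [heq]
        exact Subgroup.mul_mem _ hw' (Subgroup.inv_mem _ hu)
      have hψφ : ∀ a : A, (ψ.comp (FreeGroup.map (f : A → B))) (FreeGroup.of a)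
          * ((MonoidHom.id (FreeGroup A)) (FreeGroup.of a))⁻¹
          ∈ presKer A ⊔ (⊤ : Subgroup (FreeGroup A)).lowerCentralSeries k := by
        intro a
        simp only [MonoidHom.comp_apply, MonoidHom.id_apply]
        apply ih
        rw [map_mul, map_inv]
        rw [hφof a, hψof (f a), hφof (g0 (f a))]
        apply mem_T_iff.mpr
        rw [map_mul, map_inv, hπ'of (f (g0 (f a))), hπ'of (f a)]
        have hg := Subgroup.inv_mem _ (hg0 (f a))
        rw [mul_inv_rev, inv_inv] at hg
        exact Subgroup.Normal.mem_comm inferInstance hg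
      have hcomp := stallings_comparison (ψ.comp (FreeGroup.map (f : A → B)))
        (MonoidHom.id (FreeGroup A))
        (presKer A ⊔ (⊤ : Subgroup (FreeGroup A)).lowerCentralSeries k) hψφ
      -- the diagram chase
      have hfa : f (canonicalPresentation A w) ∈ (⊤ : Subgroup B).lowerCentralSeries (k + 1) := by
        have := mem_T_iff.mp hw
        rwa [pres_apply] at this
      have hwT : w ∈ presKer A ⊔ (⊤ : Subgroup (FreeGroup A)).lowerCentralSeries k := by
        apply ih
        exact (sup_le_sup_left (lowerCentralSeries_antitone _ (Nat.le_succ k)) (presKer B)) hw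
      have hπw : canonicalPresentation A w ∈ (⊤ : Subgroup A).lowerCentralSeries k := mem_T_iff.mp hwT
      have hx' : canonicalPresentation A w
          ∈ Subgroup.map (canonicalPresentation A) ((⊤ : Subgroup (FreeGroup A)).lowerCentralSeries k) := by
        rw [lcs_map_eq (canonicalPresentation A) (pres_surjective A)]
        exact hπw
      obtain ⟨x, hxm, hπx⟩ := hx'
      have hxc : x ∈ commutator (FreeGroup A) := by
        have hle : (⊤ : Subgroup (FreeGroup A)).lowerCentralSeries k ≤ (⊤ : Subgroup (FreeGroup A)).lowerCentralSeries 1 :=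
          lowerCentralSeries_antitone _ (Nat.succ_le_succ (Nat.zero_le m))
        exact hle hxm
      have hφxc : FreeGroup.map (f : A → B) x ∈ commutator (FreeGroup B) :=
        fg_map_commutator_le f hxc
      have hφxT : FreeGroup.map (f : A → B) x
          ∈ presKer B ⊔ (⊤ : Subgroup (FreeGroup B)).lowerCentralSeries (k + 1) := by
        apply mem_T_iff.mpr
        rw [pres_apply, hπx]
        exact hfa
      rw [← SetLike.mem_coe, Subgroup.mul_normal] at hφxT
      obtain ⟨s, hs, u, hu, hsu⟩ := hφxT
      have huD : u ∈ ⁅(⊤ : Subgroup (FreeGroup B)),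
          presKer B ⊔ (⊤ : Subgroup (FreeGroup B)).lowerCentralSeries k⁆ := by
        have h1' : (⊤ : Subgroup (FreeGroup B)).lowerCentralSeries (k + 1)
            ≤ ⁅(⊤ : Subgroup (FreeGroup B)),
                presKer B ⊔ (⊤ : Subgroup (FreeGroup B)).lowerCentralSeries k⁆ := by
          rw [show (⊤ : Subgroup (FreeGroup B)).lowerCentralSeries (k + 1)
              = ⁅(⊤ : Subgroup (FreeGroup B)).lowerCentralSeries k, ⊤⁆ from rfl, Subgroup.commutator_comm]
          exact Subgroup.commutator_mono le_rfl le_sup_right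
        exact h1' hu
      have hscomm : s ∈ commutator (FreeGroup B) := by
        have hseq : s = FreeGroup.map (f : A → B) x * u⁻¹ := by rw [← hsu]; group
        rw [hseq]
        have huc : u ∈ commutator (FreeGroup B) := by
          rw [_root_.commutator_def]
          exact Subgroup.commutator_mono le_top le_top huD
        exact Subgroup.mul_mem _ hφxc (Subgroup.inv_mem _ huc)
      obtain ⟨t, htnum, htd⟩ := h2_elem f h2 s (Subgroup.mem_inf.mpr ⟨hs, hscomm⟩)
      obtain ⟨ht1, ht2⟩ := Subgroup.mem_inf.mp htnum
      have htdD : (FreeGroup.map (f : A → B) t)⁻¹ * s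
          ∈ ⁅(⊤ : Subgroup (FreeGroup B)), presKer B ⊔ (⊤ : Subgroup (FreeGroup B)).lowerCentralSeries k⁆ :=
        Subgroup.commutator_mono le_rfl le_sup_left htd
      have hv : FreeGroup.map (f : A → B) (t⁻¹ * x)
          ∈ ⁅(⊤ : Subgroup (FreeGroup B)), presKer B ⊔ (⊤ : Subgroup (FreeGroup B)).lowerCentralSeries k⁆ := by
        rw [map_mul, map_inv, ← hsu]
        have heq : (FreeGroup.map (f : A → B) t)⁻¹ * (s * u)
            = ((FreeGroup.map (f : A → B) t)⁻¹ * s) * u := by group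
        rw [heq]
        exact Subgroup.mul_mem _ htdD huD
      have hvc : t⁻¹ * x ∈ commutator (FreeGroup A) :=
        Subgroup.mul_mem _ (Subgroup.inv_mem _ ht2) hxc
      have hψv : ψ (FreeGroup.map (f : A → B) (t⁻¹ * x))
          ∈ ⁅(⊤ : Subgroup (FreeGroup A)), presKer A ⊔ (⊤ : Subgroup (FreeGroup A)).lowerCentralSeries k⁆ := by
        have hmaple : Subgroup.map ψ ⁅(⊤ : Subgroup (FreeGroup B)),
            presKer B ⊔ (⊤ : Subgroup (FreeGroup B)).lowerCentralSeries k⁆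
            ≤ ⁅(⊤ : Subgroup (FreeGroup A)),
                presKer A ⊔ (⊤ : Subgroup (FreeGroup A)).lowerCentralSeries k⁆ := by
          rw [Subgroup.map_commutator]
          exact Subgroup.commutator_mono le_top
            (Subgroup.map_le_iff_le_comap.mpr fun w' hw' => hψT w' hw')
        exact hmaple ⟨_, hv, rfl⟩
      have hvD : t⁻¹ * x
          ∈ ⁅(⊤ : Subgroup (FreeGroup A)), presKer A ⊔ (⊤ : Subgroup (FreeGroup A)).lowerCentralSeries k⁆ := by
        have h3 := hcomp (t⁻¹ * x) hvc
        simp only [MonoidHom.comp_apply, MonoidHom.id_apply] at h3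
        have heq : t⁻¹ * x
            = (ψ (FreeGroup.map (f : A → B) (t⁻¹ * x)) * (t⁻¹ * x)⁻¹)⁻¹
              * ψ (FreeGroup.map (f : A → B) (t⁻¹ * x)) := by group
        rw [heq]
        exact Subgroup.mul_mem _ (Subgroup.inv_mem _ h3) hψv
      have hfinal : canonicalPresentation A (t⁻¹ * x) ∈ (⊤ : Subgroup A).lowerCentralSeries (k + 1) := by
        have hD : Subgroup.map (canonicalPresentation A)
            ⁅(⊤ : Subgroup (FreeGroup A)), presKer A ⊔ (⊤ : Subgroup (FreeGroup A)).lowerCentralSeries k⁆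
            ≤ (⊤ : Subgroup A).lowerCentralSeries (k + 1) := by
          rw [Subgroup.map_commutator]
          have h1' : Subgroup.map (canonicalPresentation A)
              (presKer A ⊔ (⊤ : Subgroup (FreeGroup A)).lowerCentralSeries k) ≤ (⊤ : Subgroup A).lowerCentralSeries k := by
            rw [Subgroup.map_sup]
            apply sup_le
            · rintro _ ⟨r, hr, rfl⟩
              have hr1 : canonicalPresentation A r = 1 := hr
              rw [hr1]
              exact Subgroup.one_mem _
            · exact le_of_eq (lcs_map_eq (canonicalPresentation A) (pres_surjective A) k)
          calc ⁅Subgroup.map (canonicalPresentation A) ⊤,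
                Subgroup.map (canonicalPresentation A)
                  (presKer A ⊔ (⊤ : Subgroup (FreeGroup A)).lowerCentralSeries k)⁆
              ≤ ⁅⊤, (⊤ : Subgroup A).lowerCentralSeries k⁆ := Subgroup.commutator_mono le_top h1'
            _ = ⁅(⊤ : Subgroup A).lowerCentralSeries k, ⊤⁆ := Subgroup.commutator_comm _ _
            _ = (⊤ : Subgroup A).lowerCentralSeries (k + 1) := rfl
        exact hD ⟨_, hvD, rfl⟩
      have hπt : canonicalPresentation A t = 1 := ht1
      rw [map_mul, map_inv, hπt, inv_one, one_mul, hπx] at hfinal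
      exact hfinal

/-- If `f : A → B` induces an isomorphism on abelianizations and a surjection on
second integral homology, then `f` induces an injection `A/A_ω → B/B_ω`, where
`A_ω = ⋂_k A_k`. In particular, if `A` is residually nilpotent (`A_ω = 1`), the
composition `A → B → B/B_ω` is injective. -/
theorem stmt17 {A B : Type*} [Group A] [Group B] (f : A →* B)
    (h1 : Function.Bijective (Abelianization.map f))
    (h2 : Function.Surjective (H2Map f))
    (hle : lcsOmega A ≤ (lcsOmega B).comap f) :
    Function.Injective (QuotientGroup.map (lcsOmega A) (lcsOmega B) f hle) ∧
      (lcsOmega A = ⊥ →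
        Function.Injective ((QuotientGroup.mk' (lcsOmega B)).comp f)) := by
  have key : ∀ a : A, f a ∈ lcsOmega B → a ∈ lcsOmega A := by
    intro a ha
    rw [Subgroup.mem_iInf]
    intro n
    have h' : FreeGroup.map (f : A → B) (FreeGroup.of a)
        ∈ presKer B ⊔ (⊤ : Subgroup (FreeGroup B)).lowerCentralSeries n := by
      apply mem_T_iff.mpr
      rw [show FreeGroup.map (f : A → B) (FreeGroup.of a) = FreeGroup.of (f a) from
        FreeGroup.map.of]
      rw [show canonicalPresentation B (FreeGroup.of (f a)) = f a by
        simp [canonicalPresentation]]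
      exact Subgroup.mem_iInf.mp ha n
    have h'' := mem_T_iff.mp (stallings_mono f h1 h2 n (FreeGroup.of a) h')
    rwa [show canonicalPresentation A (FreeGroup.of a) = a by
      simp [canonicalPresentation]] at h''
  constructor
  · rw [injective_iff_map_eq_one]
    intro x hx
    induction x using QuotientGroup.induction_on with
    | H a =>
      rw [QuotientGroup.map_mk] at hx
      have hfa : f a ∈ lcsOmega B := (QuotientGroup.eq_one_iff _).mp hx
      exact (QuotientGroup.eq_one_iff _).mpr (key a hfa)
  · intro hbot
    rw [injective_iff_map_eq_one]
    intro a ha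
    simp only [MonoidHom.comp_apply, QuotientGroup.mk'_apply] at ha
    have hfa : f a ∈ lcsOmega B := (QuotientGroup.eq_one_iff _).mp ha
    have := key a hfa
    rw [hbot] at this
    exact Subgroup.mem_bot.mp this
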